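/- arXiv:2012.15133 — 7 statements merged into one kernel-verified Lean document; each statement's English description precedes it below -/
import Mathlib

section
/- Let V be a finite-dimensional real inner product space, let Δ : V →ₗ[ℝ] V be self-adjoint with ⟪v, Δ v⟫ ≤ 0 for all v ∈ V, let a > 0, let L := a·id + Δ∘Δ, let dt > 0, and let A := (3/2)·id − dt·(Δ∘L). Then for every m ∈ V one has ⟪A m, Δ m⟫ ≤ 0; equivalently, since A is bijective, ⟪n, A⁻¹(Δ n)⟫ ≤ 0 for every n ∈ V. -/
/-- Nonpositivity `⟪A m, Δ m⟫ ≤ 0` for the SAV scheme operator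
`A = (3/2)·id − dt·Δ∘L`, and equivalently `⟪n, A⁻¹(Δ n)⟫ ≤ 0`
(expressed via `A v = Δ n`). -/
theorem sav_operator_inverse_laplacian_nonpositive
    {V : Type*} [NormedAddCommGroup V] [InnerProductSpace ℝ V]
    [FiniteDimensional ℝ V]
    (Δ : V →ₗ[ℝ] V) (hΔsym : Δ.IsSymmetric)
    (hΔneg : ∀ v : V, (inner ℝ v (Δ v) : ℝ) ≤ 0)
    (a : ℝ) (ha : 0 < a)
    (L : V →ₗ[ℝ] V) (hL : L = a • LinearMap.id + Δ ∘ₗ Δ)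
    (dt : ℝ) (hdt : 0 < dt)
    (A : V →ₗ[ℝ] V) (hA : A = ((3:ℝ)/2) • LinearMap.id - dt • (Δ ∘ₗ L)) :
    (∀ m : V, (inner ℝ (A m) (Δ m) : ℝ) ≤ 0) ∧
      (∀ n v : V, A v = Δ n → (inner ℝ n v : ℝ) ≤ 0) := by
  have hAapp : ∀ m : V, A m = ((3:ℝ)/2) • m - dt • (a • Δ m + Δ (Δ (Δ m))) := by
    intro m
    simp [hA, hL, LinearMap.sub_apply, LinearMap.smul_apply, LinearMap.comp_apply,
      LinearMap.add_apply, map_add, map_smul]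
  have key : ∀ m : V, (inner ℝ (A m) (Δ m) : ℝ) ≤ 0 := by
    intro m
    have h1 : (inner ℝ m (Δ m) : ℝ) ≤ 0 := hΔneg m
    rw [hAapp m, inner_sub_left, real_inner_smul_left, real_inner_smul_left,
      inner_add_left, real_inner_smul_left]
    have h3 : (inner ℝ (Δ (Δ (Δ m))) (Δ m) : ℝ) = ‖Δ (Δ m)‖^2 := by
      rw [hΔsym (Δ (Δ m)) (Δ m), real_inner_self_eq_norm_sq]
    have h4 : (inner ℝ (Δ m) (Δ m) : ℝ) = ‖Δ m‖^2 := real_inner_self_eq_norm_sq _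
    rw [h3, h4]
    nlinarith [sq_nonneg ‖Δ m‖, sq_nonneg ‖Δ (Δ m)‖, mul_pos hdt ha]
  refine ⟨key, ?_⟩
  -- A is injective, hence surjective
  have hinj : Function.Injective A := by
    intro w w' hww'
    have hz : A (w - w') = 0 := by rw [map_sub, hww', sub_self]
    set u := w - w' with hu
    have hiz : (inner ℝ u (A u) : ℝ) = 0 := by rw [hz, inner_zero_right]
    rw [hAapp u, inner_sub_right, real_inner_smul_right, real_inner_smul_right,
      inner_add_right, real_inner_smul_right] at hiz
    have h5 : (inner ℝ u u : ℝ) = ‖u‖^2 := real_inner_self_eq_norm_sq _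
    have h6 : (inner ℝ u (Δ (Δ (Δ u))) : ℝ) ≤ 0 := by
      have := hΔneg (Δ u)
      calc (inner ℝ u (Δ (Δ (Δ u))) : ℝ) = inner ℝ (Δ u) (Δ (Δ u)) := by
            rw [← hΔsym u (Δ (Δ u))]
      _ ≤ 0 := this
    have h7 : (inner ℝ u (Δ u) : ℝ) ≤ 0 := hΔneg u
    rw [h5] at hiz
    have hn : ‖u‖^2 ≤ 0 := by nlinarith [mul_pos hdt ha]
    have : u = 0 := by
      have := norm_eq_zero.mp (by nlinarith [norm_nonneg u, sq_nonneg ‖u‖] : ‖u‖ = 0)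
      exact this
    exact sub_eq_zero.mp this
  have hsurj : Function.Surjective A :=
    (LinearMap.injective_iff_surjective).mp hinj
  have hcomm : ∀ w : V, Δ (A w) = A (Δ w) := by
    intro w
    rw [hAapp w, hAapp (Δ w)]
    simp [map_sub, map_smul, map_add]
  intro n v h
  obtain ⟨w, hw⟩ := hsurj n
  have hv : v = Δ w := by
    apply hinj
    rw [h, ← hw, hcomm]
  rw [hv, ← hw]
  exact key w
end

section
/- Let V be a finite-dimensional real inner product space, let Δ : V →ₗ[ℝ] V be self-adjoint with ⟪v, Δ v⟫ ≤ 0 for all v ∈ V, let a > 0, and let L := a·id + Δ∘Δ. Fix dt > 0, a vector n̂ ∈ V, a real number E > 0, data φⁿ, φⁿ⁻¹ ∈ V, and scalars rⁿ, rⁿ⁻¹ ∈ ℝ. Then there exists a unique pair (φ, ρ) ∈ V × ℝ satisfying the two equations: (3/2)·φ − 2·φⁿ + (1/2)·φⁿ⁻¹ = dt·Δ( (ρ/√E)·n̂ + L φ ) and (3/2)·ρ − 2·rⁿ + (1/2)·rⁿ⁻¹ = (1/(2√E))·⟪n̂, (3/2)·φ − 2·φⁿ + (1/2)·φⁿ⁻¹⟫.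 -/
noncomputable def savF {V : Type*} [NormedAddCommGroup V] [InnerProductSpace ℝ V]
    (Δ L : V →ₗ[ℝ] V) (dt : ℝ) (nhat : V) (s : ℝ) : V × ℝ →ₗ[ℝ] V × ℝ where
  toFun p := (((3:ℝ)/2) • p.1 - dt • Δ ((p.2 / s) • nhat + L p.1),
    (3/2) * p.2 - (3/(4*s)) * (inner ℝ nhat p.1 : ℝ))
  map_add' p q := by
    simp only [Prod.fst_add, Prod.snd_add, Prod.mk_add_mk, map_add, smul_add,
      inner_add_right, add_div, add_smul]
    rw [Prod.mk.injEq]; constructor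
    · module
    · ring
  map_smul' c p := by
    simp only [Prod.smul_fst, Prod.smul_snd, Prod.smul_mk, RingHom.id_apply, map_smul,
      real_inner_smul_right, smul_eq_mul, mul_div_assoc, smul_smul, map_add,
      smul_sub, smul_add]
    rw [Prod.mk.injEq]; constructor
    · module
    · ring


set_option maxHeartbeats 1000000 in
/-- Unique solvability of one step of the BDF2 SAV scheme for the SPFC equation. -/
theorem sav_scheme_unique_solvability
    {V : Type*} [NormedAddCommGroup V] [InnerProductSpace ℝ V]
    [FiniteDimensional ℝ V]
    (Δ : V →ₗ[ℝ] V) (hΔsym : Δ.IsSymmetric)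
    (hΔneg : ∀ v : V, (inner ℝ v (Δ v) : ℝ) ≤ 0)
    (a : ℝ) (ha : 0 < a)
    (L : V →ₗ[ℝ] V) (hL : L = a • LinearMap.id + Δ ∘ₗ Δ)
    (dt : ℝ) (hdt : 0 < dt)
    (nhat : V) (E : ℝ) (hE : 0 < E)
    (φn φn1 : V) (rn rn1 : ℝ) :
    ∃! p : V × ℝ,
      ((3:ℝ)/2) • p.1 - (2:ℝ) • φn + ((1:ℝ)/2) • φn1
          = dt • Δ ((p.2 / Real.sqrt E) • nhat + L p.1) ∧
      (3/2) * p.2 - 2 * rn + (1/2) * rn1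
          = (1 / (2 * Real.sqrt E)) *
            (inner ℝ nhat (((3:ℝ)/2) • p.1 - (2:ℝ) • φn + ((1:ℝ)/2) • φn1) : ℝ) := by
  set s : ℝ := Real.sqrt E with hs_def
  have hs : 0 < s := Real.sqrt_pos.mpr hE
  set F := savF Δ L dt nhat s with hF
  -- injectivity of F
  have hinj : Function.Injective F := by
    rw [← LinearMap.ker_eq_bot, LinearMap.ker_eq_bot']
    intro p hp
    obtain ⟨φ, ρ⟩ := p
    have h1 : ((3:ℝ)/2) • φ - dt • Δ ((ρ / s) • nhat + L φ) = 0 := congrArg Prod.fst hp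
    have h2 : (3/2) * ρ - (3/(4*s)) * (inner ℝ nhat φ : ℝ) = 0 := congrArg Prod.snd hp
    set w : V := (ρ / s) • nhat + L φ with hw
    have h1' : ((3:ℝ)/2) • φ = dt • Δ w := by rwa [sub_eq_zero] at h1
    have hnφ : (inner ℝ nhat φ : ℝ) = 2 * s * ρ := by
      field_simp at h2; nlinarith [h2]
    have key : (3/2 : ℝ) * (inner ℝ φ w : ℝ) = dt * (inner ℝ (Δ w) w : ℝ) := by
      have := congrArg (fun v => (inner ℝ v w : ℝ)) h1'
      simpa [real_inner_smul_left] using this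
    have hφLφ : (inner ℝ φ (L φ) : ℝ) = a * (inner ℝ φ φ : ℝ) + (inner ℝ (Δ φ) (Δ φ) : ℝ) := by
      rw [hL]
      simp only [LinearMap.add_apply, LinearMap.smul_apply, LinearMap.id_apply,
        LinearMap.coe_comp, Function.comp_apply, inner_add_right, real_inner_smul_right,
        hΔsym φ (Δ φ)]
    have hφw : (inner ℝ φ w : ℝ) = 2 * ρ^2 + a * (inner ℝ φ φ : ℝ) + (inner ℝ (Δ φ) (Δ φ) : ℝ) := by
      rw [hw, inner_add_right, real_inner_smul_right, hφLφ]
      have h3 : (inner ℝ φ nhat : ℝ) = 2 * s * ρ := by rw [real_inner_comm]; exact hnφ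
      rw [h3]; field_simp; ring
    have hneg : dt * (inner ℝ (Δ w) w : ℝ) ≤ 0 := by
      have := hΔneg w
      rw [← hΔsym w w] at this
      nlinarith
    have hsum : 2 * ρ^2 + a * (inner ℝ φ φ : ℝ) + (inner ℝ (Δ φ) (Δ φ) : ℝ) ≤ 0 := by
      nlinarith [key, hφw, hneg]
    have hφφ : (0:ℝ) ≤ (inner ℝ φ φ : ℝ) := real_inner_self_nonneg
    have hΔφ : (0:ℝ) ≤ (inner ℝ (Δ φ) (Δ φ) : ℝ) := real_inner_self_nonneg
    have hρ : ρ = 0 := by nlinarith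
    have hφ : φ = 0 := by
      have : (inner ℝ φ φ : ℝ) = 0 := by nlinarith
      exact inner_self_eq_zero.mp this
    simp [hρ, hφ, Prod.ext_iff]
  have hsurj : Function.Surjective F := (LinearMap.injective_iff_surjective).mp hinj
  -- the constant right-hand side
  set c : V × ℝ := ((2:ℝ) • φn - ((1:ℝ)/2) • φn1,
    2 * rn - (1/2) * rn1 - (1/(2*s)) * (2 * (inner ℝ nhat φn : ℝ) - (1/2) * (inner ℝ nhat φn1 : ℝ)))
    with hc
  obtain ⟨p₀, hp₀⟩ := hsurj c
  have hequiv : ∀ p : V × ℝ,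
      (((3:ℝ)/2) • p.1 - (2:ℝ) • φn + ((1:ℝ)/2) • φn1
          = dt • Δ ((p.2 / s) • nhat + L p.1) ∧
      (3/2) * p.2 - 2 * rn + (1/2) * rn1
          = (1 / (2 * s)) *
            (inner ℝ nhat (((3:ℝ)/2) • p.1 - (2:ℝ) • φn + ((1:ℝ)/2) • φn1) : ℝ)) ↔ F p = c := by
    intro p
    have hFp : F p = (((3:ℝ)/2) • p.1 - dt • Δ ((p.2 / s) • nhat + L p.1),
        (3/2) * p.2 - (3/(4*s)) * (inner ℝ nhat p.1 : ℝ)) := rfl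
    rw [hFp, hc, Prod.mk.injEq]
    have hin : (inner ℝ nhat (((3:ℝ)/2) • p.1 - (2:ℝ) • φn + ((1:ℝ)/2) • φn1) : ℝ)
        = (3/2) * (inner ℝ nhat p.1 : ℝ) - 2 * (inner ℝ nhat φn : ℝ)
          + (1/2) * (inner ℝ nhat φn1 : ℝ) := by
      simp [inner_add_right, inner_sub_right, real_inner_smul_right]
    rw [hin]
    constructor
    · rintro ⟨e1, e2⟩
      constructor
      · linear_combination (norm := module) e1
      · linear_combination e2
    · rintro ⟨e1, e2⟩
      constructor
      · linear_combination (norm := module) e1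
      · linear_combination e2
  exact ⟨p₀, (hequiv p₀).mpr hp₀, fun q hq => hinj (by rw [hp₀, ← (hequiv q).mp hq])⟩
end

section
/- Let V be a finite-dimensional real inner product space, let Δ : V →ₗ[ℝ] V be self-adjoint, let w ∈ V satisfy Δ w = 0, and let dt > 0. Suppose φ : ℕ → V and μ : ℕ → V are sequences such that for every n, (3/2)·φ(n+2) − 2·φ(n+1) + (1/2)·φ(n) = dt·Δ(μ(n+2)), and suppose ⟪w, φ(0)⟫ = ⟪w, φ(1)⟫ = β for some β ∈ ℝ. Then ⟪w, φ(n)⟫ = β for every n. -/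
/-- Mass conservation for the BDF2 scheme: the discrete mean `⟪w, φ(n)⟫`
is conserved in time provided the two initial data have equal mean. -/
theorem bdf2_mass_conservation
    {V : Type*} [NormedAddCommGroup V] [InnerProductSpace ℝ V]
    [FiniteDimensional ℝ V]
    (Δ : V →ₗ[ℝ] V) (hΔsym : Δ.IsSymmetric)
    (w : V) (hw : Δ w = 0)
    (dt : ℝ) (hdt : 0 < dt)
    (φ μ : ℕ → V)
    (hscheme : ∀ n : ℕ,
      ((3:ℝ)/2) • φ (n+2) - (2:ℝ) • φ (n+1) + ((1:ℝ)/2) • φ n = dt • Δ (μ (n+2)))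
    (β : ℝ)
    (h0 : (inner ℝ w (φ 0) : ℝ) = β)
    (h1 : (inner ℝ w (φ 1) : ℝ) = β) :
    ∀ n : ℕ, (inner ℝ w (φ n) : ℝ) = β := by
  have key : ∀ n, (inner ℝ w (φ n) : ℝ) = β ∧ (inner ℝ w (φ (n+1)) : ℝ) = β := by
    intro n
    induction n with
    | zero => exact ⟨h0, h1⟩
    | succ k ih =>
      refine ⟨ih.2, ?_⟩
      have h := congrArg (fun v => (inner ℝ w v : ℝ)) (hscheme k)
      simp only [inner_add_right, inner_sub_right, real_inner_smul_right] at h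
      have hz : (inner ℝ w (Δ (μ (k+2))) : ℝ) = 0 := by
        rw [← hΔsym w (μ (k+2)), hw, inner_zero_left]
      rw [hz, ih.1, ih.2] at h
      have : (3:ℝ)/2 * (inner ℝ w (φ (k+2)) : ℝ) = 3/2 * β := by linarith [h]
      linarith
  exact fun n => (key n).1
end

section
/- Let V be a finite-dimensional real inner product space, let Δ : V →ₗ[ℝ] V be self-adjoint, let a > 0, and let L := a·id + Δ∘Δ. Fix dt > 0, n̂ ∈ V, E > 0. Suppose φⁿ⁺¹, φⁿ, φⁿ⁻¹ ∈ V and rⁿ⁺¹, rⁿ, rⁿ⁻¹ ∈ ℝ satisfy (3/2)·φⁿ⁺¹ − 2·φⁿ + (1/2)·φⁿ⁻¹ = dt·Δ μ with μ := (rⁿ⁺¹/√E)·n̂ + L φⁿ⁺¹, and (3/2)·rⁿ⁺¹ − 2·rⁿ + (1/2)·rⁿ⁻¹ = (1/(2√E))·⟪n̂, (3/2)·φⁿ⁺¹ − 2·φⁿ + (1/2)·φⁿ⁻¹⟫. Define the modified energy ℰ(φ, ψ, r, s) := (1/4)·(⟪φ, L φ⟫ + ⟪2φ−ψ, L(2φ−ψ)⟫)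 + (1/2)·(r² + (2r−s)²). Then the exact energy identity holds: ℰ(φⁿ⁺¹, φⁿ, rⁿ⁺¹, rⁿ) − ℰ(φⁿ, φⁿ⁻¹, rⁿ, rⁿ⁻¹) = −(1/4)·⟪φⁿ⁺¹ − 2φⁿ + φⁿ⁻¹, L(φⁿ⁺¹ − 2φⁿ + φⁿ⁻¹)⟫ − (1/2)·(rⁿ⁺¹ − 2rⁿ + rⁿ⁻¹)² + dt·⟪Δ μ, μ⟫. -/
/-- Exact energy dissipation identity for the BDF2 SAV scheme
(proof of Theorem 3.1), with modified energy
`ℰ(φ, ψ, r, s) = (1/4)(⟪φ, Lφ⟫ + ⟪2φ−ψ, L(2φ−ψ)⟫) + (1/2)(r² + (2r−s)²)`. -/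
theorem sav_scheme_energy_identity
    {V : Type*} [NormedAddCommGroup V] [InnerProductSpace ℝ V]
    [FiniteDimensional ℝ V]
    (Δ : V →ₗ[ℝ] V) (hΔsym : Δ.IsSymmetric)
    (a : ℝ) (ha : 0 < a)
    (L : V →ₗ[ℝ] V) (hL : L = a • LinearMap.id + Δ ∘ₗ Δ)
    (dt : ℝ) (hdt : 0 < dt)
    (nhat : V) (E : ℝ) (hE : 0 < E)
    (φ1 φ0 φm1 : V) (r1 r0 rm1 : ℝ)
    (μ : V)
    (hμ : μ = (r1 / Real.sqrt E) • nhat + L φ1)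
    (hscheme1 : ((3:ℝ)/2) • φ1 - (2:ℝ) • φ0 + ((1:ℝ)/2) • φm1 = dt • Δ μ)
    (hscheme2 : (3/2) * r1 - 2 * r0 + (1/2) * rm1
        = (1 / (2 * Real.sqrt E)) *
          (inner ℝ nhat (((3:ℝ)/2) • φ1 - (2:ℝ) • φ0 + ((1:ℝ)/2) • φm1) : ℝ))
    (calE : V → V → ℝ → ℝ → ℝ)
    (hcalE : ∀ (φ ψ : V) (r s : ℝ),
      calE φ ψ r s
        = (1/4) * ((inner ℝ φ (L φ) : ℝ)
            + (inner ℝ ((2:ℝ) • φ - ψ) (L ((2:ℝ) • φ - ψ)) : ℝ))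
          + (1/2) * (r^2 + (2*r - s)^2)) :
    calE φ1 φ0 r1 r0 - calE φ0 φm1 r0 rm1
      = -(1/4) * (inner ℝ (φ1 - (2:ℝ) • φ0 + φm1) (L (φ1 - (2:ℝ) • φ0 + φm1)) : ℝ)
        - (1/2) * (r1 - 2*r0 + rm1)^2
        + dt * (inner ℝ (Δ μ) μ : ℝ) := by
  have hsE : Real.sqrt E ≠ 0 := ne_of_gt (Real.sqrt_pos.mpr hE)
  -- L is symmetric
  have hLsym : ∀ u v : V, (inner ℝ u (L v) : ℝ) = (inner ℝ v (L u) : ℝ) := by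
    intro u v
    rw [hL]
    simp only [LinearMap.add_apply, LinearMap.smul_apply, LinearMap.id_apply,
      LinearMap.comp_apply, inner_add_right, real_inner_smul_right]
    rw [real_inner_comm u v, ← hΔsym u (Δ v), ← hΔsym (Δ u) v, real_inner_comm (Δ (Δ u)) v]
  -- rewrite dt * ⟪Δμ, μ⟫ as ⟪g, μ⟫
  have hdtinner : dt * (inner ℝ (Δ μ) μ : ℝ)
      = (inner ℝ (((3:ℝ)/2) • φ1 - (2:ℝ) • φ0 + ((1:ℝ)/2) • φm1) μ : ℝ) := by
    rw [hscheme1, real_inner_smul_left]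
  have hn : (inner ℝ nhat (((3:ℝ)/2) • φ1 - (2:ℝ) • φ0 + ((1:ℝ)/2) • φm1) : ℝ)
      = 2 * Real.sqrt E * ((3/2) * r1 - 2 * r0 + (1/2) * rm1) := by
    rw [hscheme2]; field_simp
  simp only [inner_add_right, inner_sub_right, real_inner_smul_right] at hn
  rw [real_inner_comm φ1 nhat, real_inner_comm φ0 nhat, real_inner_comm φm1 nhat] at hn
  have hkey : r1 / Real.sqrt E * ((3:ℝ)/2 * (inner ℝ φ1 nhat : ℝ)
      - 2 * (inner ℝ φ0 nhat : ℝ) + (1:ℝ)/2 * (inner ℝ φm1 nhat : ℝ))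
      = 2 * r1 * ((3/2) * r1 - 2 * r0 + (1/2) * rm1) := by
    rw [hn]; field_simp
  rw [hcalE, hcalE, hdtinner, hμ]
  have h01 : (inner ℝ φ0 (L φ1) : ℝ) = (inner ℝ φ1 (L φ0) : ℝ) := hLsym φ0 φ1
  have h0m : (inner ℝ φm1 (L φ0) : ℝ) = (inner ℝ φ0 (L φm1) : ℝ) := hLsym φm1 φ0
  have h1m : (inner ℝ φm1 (L φ1) : ℝ) = (inner ℝ φ1 (L φm1) : ℝ) := hLsym φm1 φ1
  simp only [inner_add_left, inner_add_right, inner_sub_left, inner_sub_right,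
    real_inner_smul_left, real_inner_smul_right, map_add, map_sub, map_smul,
    inner_smul_left, inner_smul_right, RCLike.ofReal_real_eq_id, id_eq,
    conj_trivial]
  rw [hkey, h01, h0m, h1m]
  ring
end

section
/- Let V be a finite-dimensional real inner product space, let Δ : V →ₗ[ℝ] V be self-adjoint with ⟪v, Δ v⟫ ≤ 0 for all v ∈ V, let a > 0, and let L := a·id + Δ∘Δ. Fix dt > 0, n̂ ∈ V, E > 0. Suppose φⁿ⁺¹, φⁿ, φⁿ⁻¹ ∈ V and rⁿ⁺¹, rⁿ, rⁿ⁻¹ ∈ ℝ satisfy (3/2)·φⁿ⁺¹ − 2·φⁿ + (1/2)·φⁿ⁻¹ = dt·Δ( (rⁿ⁺¹/√E)·n̂ + L φⁿ⁺¹ ) and (3/2)·rⁿ⁺¹ − 2·rⁿ + (1/2)·rⁿ⁻¹ = (1/(2√E))·⟪n̂, (3/2)·φⁿ⁺¹ − 2·φⁿ + (1/2)·φⁿ⁻¹⟫. Define ℰ(φ, ψ, r, s) := (1/4)·(⟪φ, L φ⟫ + ⟪2φ−ψ, L(2φ−ψ)⟫) + (1/2)·(r² + (2r−s)²). Then ℰ(φⁿ⁺¹,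 φⁿ, rⁿ⁺¹, rⁿ) ≤ ℰ(φⁿ, φⁿ⁻¹, rⁿ, rⁿ⁻¹). -/
/-- BDF2 telescoping identity for a symmetric bilinear form. -/
lemma bdf2_bilinear_id {V : Type*} [AddCommGroup V] [Module ℝ V]
    (B : V → V → ℝ)
    (haddl : ∀ x y z, B (x + y) z = B x z + B y z)
    (hsmull : ∀ (c : ℝ) x y, B (c • x) y = c * B x y)
    (hsymm : ∀ x y, B x y = B y x)
    (u v w : V) :
    B u (((3:ℝ)/2) • u - (2:ℝ) • v + ((1:ℝ)/2) • w)
      = (1/4) * (B u u + B ((2:ℝ) • u - v) ((2:ℝ) • u - v))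
        - (1/4) * (B v v + B ((2:ℝ) • v - w) ((2:ℝ) • v - w))
        + (1/4) * B (u - (2:ℝ) • v + w) (u - (2:ℝ) • v + w) := by
  have haddr : ∀ x y z, B x (y + z) = B x y + B x z := by
    intro x y z; rw [hsymm, haddl, hsymm y x, hsymm z x]
  have hsmulr : ∀ (c : ℝ) x y, B x (c • y) = c * B x y := by
    intro c x y; rw [hsymm, hsmull, hsymm y x]
  have hsubl : ∀ x y z, B (x - y) z = B x z - B y z := by
    intro x y z
    have := haddl (x - y) y z
    simp at this; linarith
  have hsubr : ∀ x y z, B x (y - z) = B x y - B x z := by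
    intro x y z; rw [hsymm, hsubl, hsymm y x, hsymm z x]
  simp only [hsubl, hsubr, haddl, haddr, hsmull, hsmulr]
  rw [hsymm v u, hsymm w u, hsymm w v]
  ring

/-- Theorem 3.1: unconditional energy stability of the BDF2 SAV scheme —
the modified energy
`ℰ(φ, ψ, r, s) = (1/4)(⟪φ, Lφ⟫ + ⟪2φ−ψ, L(2φ−ψ)⟫) + (1/2)(r² + (2r−s)²)`
is non-increasing at each time step. -/
theorem sav_scheme_energy_stability
    {V : Type*} [NormedAddCommGroup V] [InnerProductSpace ℝ V]
    [FiniteDimensional ℝ V]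
    (Δ : V →ₗ[ℝ] V) (hΔsym : Δ.IsSymmetric)
    (hΔneg : ∀ v : V, (inner ℝ v (Δ v) : ℝ) ≤ 0)
    (a : ℝ) (ha : 0 < a)
    (L : V →ₗ[ℝ] V) (hL : L = a • LinearMap.id + Δ ∘ₗ Δ)
    (dt : ℝ) (hdt : 0 < dt)
    (nhat : V) (E : ℝ) (hE : 0 < E)
    (φ1 φ0 φm1 : V) (r1 r0 rm1 : ℝ)
    (hscheme1 : ((3:ℝ)/2) • φ1 - (2:ℝ) • φ0 + ((1:ℝ)/2) • φm1
        = dt • Δ ((r1 / Real.sqrt E) • nhat + L φ1))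
    (hscheme2 : (3/2) * r1 - 2 * r0 + (1/2) * rm1
        = (1 / (2 * Real.sqrt E)) *
          (inner ℝ nhat (((3:ℝ)/2) • φ1 - (2:ℝ) • φ0 + ((1:ℝ)/2) • φm1) : ℝ))
    (calE : V → V → ℝ → ℝ → ℝ)
    (hcalE : ∀ (φ ψ : V) (r s : ℝ),
      calE φ ψ r s
        = (1/4) * ((inner ℝ φ (L φ) : ℝ)
            + (inner ℝ ((2:ℝ) • φ - ψ) (L ((2:ℝ) • φ - ψ)) : ℝ))
          + (1/2) * (r^2 + (2*r - s)^2)) :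
    calE φ1 φ0 r1 r0 ≤ calE φ0 φm1 r0 rm1 := by
  have hsE : (0:ℝ) < Real.sqrt E := Real.sqrt_pos.mpr hE
  set g : V := ((3:ℝ)/2) • φ1 - (2:ℝ) • φ0 + ((1:ℝ)/2) • φm1 with hg
  set μ : V := (r1 / Real.sqrt E) • nhat + L φ1 with hμ
  -- B(x,y) = ⟪x, L y⟫
  set B : V → V → ℝ := fun x y => (inner ℝ x (L y) : ℝ) with hB
  have hLform : ∀ x y : V, B x y = a * (inner ℝ x y : ℝ) + (inner ℝ (Δ x) (Δ y) : ℝ) := by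
    intro x y
    simp only [hB, hL, LinearMap.add_apply, LinearMap.smul_apply, LinearMap.id_apply,
      LinearMap.comp_apply, inner_add_right, real_inner_smul_right]
    rw [← hΔsym x (Δ y)]
  have haddl : ∀ x y z, B (x + y) z = B x z + B y z := by
    intro x y z; simp [hB, inner_add_left]
  have hsmull : ∀ (c : ℝ) x y, B (c • x) y = c * B x y := by
    intro c x y; simp [hB, real_inner_smul_left]
  have hsymm : ∀ x y, B x y = B y x := by
    intro x y; rw [hLform, hLform, real_inner_comm x y, real_inner_comm (Δ x) (Δ y)]
  have hBnn : ∀ x, 0 ≤ B x x := by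
    intro x
    rw [hLform]
    have h1 : (0:ℝ) ≤ (inner ℝ x x : ℝ) := real_inner_self_nonneg
    have h2 : (0:ℝ) ≤ (inner ℝ (Δ x) (Δ x) : ℝ) := real_inner_self_nonneg
    nlinarith
  -- inner μ g ≤ 0
  have hμg : (inner ℝ μ g : ℝ) ≤ 0 := by
    rw [hscheme1, real_inner_smul_right]
    exact mul_nonpos_of_nonneg_of_nonpos hdt.le (hΔneg μ)
  -- split inner μ g
  have hsplit : (inner ℝ μ g : ℝ) = (r1 / Real.sqrt E) * (inner ℝ nhat g : ℝ) + B φ1 g := by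
    rw [hμ]
    rw [inner_add_left, real_inner_smul_left]
    congr 1
    rw [hsymm φ1 g]
    exact (real_inner_comm (L φ1) g).symm
  -- nhat part
  have hn : (r1 / Real.sqrt E) * (inner ℝ nhat g : ℝ)
      = r1 * (3 * r1 - 4 * r0 + rm1) := by
    have h2 : (inner ℝ nhat g : ℝ) = 2 * Real.sqrt E * ((3/2) * r1 - 2 * r0 + (1/2) * rm1) := by
      rw [hscheme2]; field_simp
    rw [h2]; field_simp; ring
  -- BDF2 identity for B
  have hBid := bdf2_bilinear_id B haddl hsmull hsymm φ1 φ0 φm1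
  -- scalar identity
  have hrid : r1 * (3 * r1 - 4 * r0 + rm1)
      = (1/2) * (r1^2 + (2*r1 - r0)^2) - (1/2) * (r0^2 + (2*r0 - rm1)^2)
        + (1/2) * (r1 - 2*r0 + rm1)^2 := by ring
  have hd : 0 ≤ B (φ1 - (2:ℝ) • φ0 + φm1) (φ1 - (2:ℝ) • φ0 + φm1) := hBnn _
  have hr2 : (0:ℝ) ≤ (r1 - 2*r0 + rm1)^2 := sq_nonneg _
  rw [hcalE, hcalE]
  have e1 : (inner ℝ φ1 (L φ1) : ℝ) = B φ1 φ1 := rfl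
  have e2 : (inner ℝ ((2:ℝ) • φ1 - φ0) (L ((2:ℝ) • φ1 - φ0)) : ℝ) = B ((2:ℝ) • φ1 - φ0) ((2:ℝ) • φ1 - φ0) := rfl
  have e3 : (inner ℝ φ0 (L φ0) : ℝ) = B φ0 φ0 := rfl
  have e4 : (inner ℝ ((2:ℝ) • φ0 - φm1) (L ((2:ℝ) • φ0 - φm1)) : ℝ) = B ((2:ℝ) • φ0 - φm1) ((2:ℝ) • φ0 - φm1) := rfl
  rw [e1, e2, e3, e4]
  have := hsplit
  rw [hn] at this
  linarith [hμg, this, hBid, hd, hr2]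
end

section
/- Let V be a finite-dimensional real inner product space, let Δ : V →ₗ[ℝ] V be self-adjoint with ⟪v, Δ v⟫ ≤ 0 for all v ∈ V, let 0 < a ≤ 1, let L := a·id + Δ∘Δ, and let dt > 0. Suppose φ : ℕ → V, r : ℕ → ℝ are sequences such that for every n there exist n̂ₙ ∈ V and Eₙ > 0 with (3/2)·φ(n+2) − 2·φ(n+1) + (1/2)·φ(n) = dt·Δ( (r(n+2)/√Eₙ)·n̂ₙ + L φ(n+2) ) and (3/2)·r(n+2) − 2·r(n+1) + (1/2)·r(n) = (1/(2√Eₙ))·⟪n̂ₙ, (3/2)·φ(n+2) − 2·φ(n+1) + (1/2)·φ(n)⟫. Suppose further the initial modified energy satisfies (1/4)·(⟪φ(1), L φ(1)⟫ + ⟪2φ(1)−φ(0), L(2φ(1)−φ(0))⟫) + (1/2)·(r(1)² + (2r(1)−r(0))²) ≤ C̃₀. Then for every m ≥ 1: (i) a·‖φ(m)‖² + ‖Δ φ(m)‖² ≤ 4·C̃₀; (ii) r(m)² ≤ 2·C̃₀; and (iii) ‖φ(m)‖² − ⟪φ(m), Δ φ(m)⟫ + ‖Δ φ(m)‖² ≤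 6·C̃₀/a. -/
lemma inner_bdf2_identity {V : Type*} [NormedAddCommGroup V] [InnerProductSpace ℝ V]
    (c b d : V) :
    (inner ℝ (((3:ℝ)/2) • c - (2:ℝ) • b + ((1:ℝ)/2) • d) c : ℝ)
      = (1/4) * ((inner ℝ c c : ℝ) + (inner ℝ ((2:ℝ)•c - b) ((2:ℝ)•c - b) : ℝ)
          - (inner ℝ b b : ℝ) - (inner ℝ ((2:ℝ)•b - d) ((2:ℝ)•b - d) : ℝ)
          + (inner ℝ (c - (2:ℝ)•b + d) (c - (2:ℝ)•b + d) : ℝ)) := by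
  simp only [inner_sub_left, inner_sub_right, inner_add_left, inner_add_right,
    real_inner_smul_left, real_inner_smul_right]
  linear_combination (-1 : ℝ) * (real_inner_comm c b) - (1/4) * (real_inner_comm d c)

set_option maxHeartbeats 1600000 in
/-- Corollary 3.1 (with Remark 3.1): uniform-in-time discrete H² bound for the
numerical solution of the BDF2 SAV scheme, together with the bound on the
scalar auxiliary variable. -/
theorem sav_scheme_uniform_H2_bound
    {V : Type*} [NormedAddCommGroup V] [InnerProductSpace ℝ V]
    [FiniteDimensional ℝ V]
    (Δ : V →ₗ[ℝ] V) (hΔsym : Δ.IsSymmetric)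
    (hΔneg : ∀ v : V, (inner ℝ v (Δ v) : ℝ) ≤ 0)
    (a : ℝ) (ha0 : 0 < a) (ha1 : a ≤ 1)
    (L : V →ₗ[ℝ] V) (hL : L = a • LinearMap.id + Δ ∘ₗ Δ)
    (dt : ℝ) (hdt : 0 < dt)
    (φ : ℕ → V) (r : ℕ → ℝ)
    (hscheme : ∀ n : ℕ, ∃ (nhat : V) (E : ℝ), 0 < E ∧
      (((3:ℝ)/2) • φ (n+2) - (2:ℝ) • φ (n+1) + ((1:ℝ)/2) • φ n
          = dt • Δ ((r (n+2) / Real.sqrt E) • nhat + L (φ (n+2)))) ∧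
      ((3/2) * r (n+2) - 2 * r (n+1) + (1/2) * r n
          = (1 / (2 * Real.sqrt E)) *
            (inner ℝ nhat
              (((3:ℝ)/2) • φ (n+2) - (2:ℝ) • φ (n+1) + ((1:ℝ)/2) • φ n) : ℝ)))
    (C0 : ℝ)
    (hinit : (1/4) * ((inner ℝ (φ 1) (L (φ 1)) : ℝ)
          + (inner ℝ ((2:ℝ) • φ 1 - φ 0) (L ((2:ℝ) • φ 1 - φ 0)) : ℝ))
        + (1/2) * ((r 1)^2 + (2 * r 1 - r 0)^2) ≤ C0) :
    ∀ m : ℕ, 1 ≤ m →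
      (a * ‖φ m‖^2 + ‖Δ (φ m)‖^2 ≤ 4 * C0) ∧
      ((r m)^2 ≤ 2 * C0) ∧
      (‖φ m‖^2 - (inner ℝ (φ m) (Δ (φ m)) : ℝ) + ‖Δ (φ m)‖^2 ≤ 6 * C0 / a) := by
  -- Bilinear expansion of the L-form
  have hB : ∀ v w : V, (inner ℝ v (L w) : ℝ)
      = a * (inner ℝ v w : ℝ) + (inner ℝ (Δ v) (Δ w) : ℝ) := by
    intro v w
    rw [hL]
    simp only [LinearMap.add_apply, LinearMap.smul_apply, LinearMap.id_apply,
      LinearMap.comp_apply, inner_add_right, real_inner_smul_right]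
    rw [← hΔsym v (Δ w)]
  have hQnn : ∀ v : V, 0 ≤ (inner ℝ v (L v) : ℝ) := by
    intro v
    rw [hB]
    exact add_nonneg (mul_nonneg ha0.le real_inner_self_nonneg) real_inner_self_nonneg
  set En : ℕ → ℝ := fun n => (1/4) * ((inner ℝ (φ (n+1)) (L (φ (n+1))) : ℝ)
        + (inner ℝ ((2:ℝ) • φ (n+1) - φ n) (L ((2:ℝ) • φ (n+1) - φ n)) : ℝ))
      + (1/2) * ((r (n+1))^2 + (2 * r (n+1) - r n)^2) with hEn
  have hmono : ∀ n, En (n+1) ≤ En n := by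
    intro n
    obtain ⟨nhat, E, hE, heq1, heq2⟩ := hscheme n
    have hsE : (0:ℝ) < Real.sqrt E := Real.sqrt_pos.mpr hE
    have key1 : (inner ℝ (((3:ℝ)/2) • φ (n+2) - (2:ℝ) • φ (n+1) + ((1:ℝ)/2) • φ n)
          (L (φ (n+2))) : ℝ)
        = (1/4) * ((inner ℝ (φ (n+2)) (L (φ (n+2))) : ℝ)
            + (inner ℝ ((2:ℝ) • φ (n+2) - φ (n+1)) (L ((2:ℝ) • φ (n+2) - φ (n+1))) : ℝ)
            - (inner ℝ (φ (n+1)) (L (φ (n+1))) : ℝ)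
            - (inner ℝ ((2:ℝ) • φ (n+1) - φ n) (L ((2:ℝ) • φ (n+1) - φ n)) : ℝ)
            + (inner ℝ (φ (n+2) - (2:ℝ) • φ (n+1) + φ n)
                (L (φ (n+2) - (2:ℝ) • φ (n+1) + φ n)) : ℝ)) := by
      simp only [hB]
      simp only [map_add, map_sub, map_smul]
      rw [inner_bdf2_identity (φ (n+2)) (φ (n+1)) (φ n),
        inner_bdf2_identity (Δ (φ (n+2))) (Δ (φ (n+1))) (Δ (φ n))]
      ring
    have h3 : (inner ℝ nhat
          (((3:ℝ)/2) • φ (n+2) - (2:ℝ) • φ (n+1) + ((1:ℝ)/2) • φ n) : ℝ)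
        = 2 * Real.sqrt E * ((3/2) * r (n+2) - 2 * r (n+1) + (1/2) * r n) := by
      rw [heq2]
      field_simp
    have h1 : (inner ℝ (((3:ℝ)/2) • φ (n+2) - (2:ℝ) • φ (n+1) + ((1:ℝ)/2) • φ n)
        ((r (n+2) / Real.sqrt E) • nhat + L (φ (n+2))) : ℝ) ≤ 0 := by
      rw [heq1, real_inner_smul_left]
      have hneg := hΔneg ((r (n+2) / Real.sqrt E) • nhat + L (φ (n+2)))
      have hsym := hΔsym ((r (n+2) / Real.sqrt E) • nhat + L (φ (n+2)))
        ((r (n+2) / Real.sqrt E) • nhat + L (φ (n+2)))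
      nlinarith [hdt.le]
    have hdecomp : (inner ℝ (((3:ℝ)/2) • φ (n+2) - (2:ℝ) • φ (n+1) + ((1:ℝ)/2) • φ n)
          ((r (n+2) / Real.sqrt E) • nhat + L (φ (n+2))) : ℝ)
        = (r (n+2) / Real.sqrt E) *
            (inner ℝ (((3:ℝ)/2) • φ (n+2) - (2:ℝ) • φ (n+1) + ((1:ℝ)/2) • φ n) nhat : ℝ)
          + (inner ℝ (((3:ℝ)/2) • φ (n+2) - (2:ℝ) • φ (n+1) + ((1:ℝ)/2) • φ n)
              (L (φ (n+2))) : ℝ) := by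
      rw [inner_add_right, real_inner_smul_right]
    have h4 : (r (n+2) / Real.sqrt E) *
          (inner ℝ (((3:ℝ)/2) • φ (n+2) - (2:ℝ) • φ (n+1) + ((1:ℝ)/2) • φ n) nhat : ℝ)
        = 2 * r (n+2) * ((3/2) * r (n+2) - 2 * r (n+1) + (1/2) * r n) := by
      rw [real_inner_comm, h3]
      field_simp
    have hr : 2 * r (n+2) * ((3/2) * r (n+2) - 2 * r (n+1) + (1/2) * r n)
        = (1/2) * ((r (n+2))^2 + (2 * r (n+2) - r (n+1))^2
            - (r (n+1))^2 - (2 * r (n+1) - r n)^2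
            + (r (n+2) - 2 * r (n+1) + r n)^2) := by ring
    rw [hdecomp, h4, key1, hr] at h1
    have hq := hQnn (φ (n+2) - (2:ℝ) • φ (n+1) + φ n)
    have hsq := sq_nonneg (r (n+2) - 2 * r (n+1) + r n)
    simp only [hEn, show n+1+1 = n+2 from rfl]
    linarith [h1]
  have hC : ∀ n, En n ≤ C0 := by
    intro n
    induction n with
    | zero => simpa [hEn] using hinit
    | succ k ih => exact (hmono k).trans ih
  intro m hm
  obtain ⟨k, rfl⟩ : ∃ k, m = k + 1 := ⟨m - 1, by omega⟩
  have h := hC k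
  simp only [hEn] at h
  have hq2 := hQnn ((2:ℝ) • φ (k+1) - φ k)
  have hq1 := hQnn (φ (k+1))
  have e1 : (inner ℝ (φ (k+1)) (L (φ (k+1))) : ℝ)
      = a * ‖φ (k+1)‖^2 + ‖Δ (φ (k+1))‖^2 := by
    rw [hB, real_inner_self_eq_norm_sq, real_inner_self_eq_norm_sq]
  have hi : a * ‖φ (k+1)‖^2 + ‖Δ (φ (k+1))‖^2 ≤ 4 * C0 := by
    rw [← e1]
    nlinarith [sq_nonneg (r (k+1)), sq_nonneg (2 * r (k+1) - r k)]
  refine ⟨hi, ?_, ?_⟩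
  · rw [← e1] at hi
    nlinarith [sq_nonneg (2 * r (k+1) - r k), hQnn (φ (k+1))]
  · have habs : -(inner ℝ (φ (k+1)) (Δ (φ (k+1))) : ℝ)
        ≤ ‖φ (k+1)‖ * ‖Δ (φ (k+1))‖ := by
      have h1 := abs_real_inner_le_norm (φ (k+1)) (Δ (φ (k+1)))
      have h2 := neg_abs_le (inner ℝ (φ (k+1)) (Δ (φ (k+1))) : ℝ)
      linarith
    have hsq2 : ‖φ (k+1)‖ * ‖Δ (φ (k+1))‖
        ≤ (1/2) * (‖φ (k+1)‖^2 + ‖Δ (φ (k+1))‖^2) := by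
      nlinarith [sq_nonneg (‖φ (k+1)‖ - ‖Δ (φ (k+1))‖)]
    rw [le_div_iff₀ ha0]
    have hk1 : a * (-(inner ℝ (φ (k+1)) (Δ (φ (k+1))) : ℝ))
        ≤ a * ((1/2) * (‖φ (k+1)‖^2 + ‖Δ (φ (k+1))‖^2)) :=
      mul_le_mul_of_nonneg_left (habs.trans hsq2) ha0.le
    have hk2 : a * ‖Δ (φ (k+1))‖^2 ≤ ‖Δ (φ (k+1))‖^2 := by
      nlinarith [sq_nonneg ‖Δ (φ (k+1))‖]
    nlinarith [hi, hk1, hk2]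
end

section
/- Let V be a finite-dimensional real inner product space and let Δ : V →ₗ[ℝ] V be self-adjoint with ⟪v, Δ v⟫ ≤ 0 for all v ∈ V. Then for every f ∈ V: ( −⟪Δ f, Δ(Δ f)⟫ )³ ≤ ‖Δ f‖⁴ · ( −⟪Δ²f, Δ(Δ²f)⟫ ), where Δ²f := Δ(Δ f). -/
/-- Quadratic nonnegativity implies discriminant condition. -/
lemma quad_discrim (A C D : ℝ) (hD : 0 ≤ D)
    (h : ∀ t : ℝ, 0 ≤ A + 2*t*C + t^2*D) : C^2 ≤ A*D := by
  rcases eq_or_lt_of_le hD with hD0 | hDpos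
  · by_cases hC : C = 0
    · have := h 0
      nlinarith
    · exfalso
      have ht := h (-(A+1)/(2*C))
      rw [← hD0] at ht
      have hval : 2*(-(A+1)/(2*C))*C = -(A+1) := by
        field_simp
      rw [hval] at ht
      linarith
  · have ht := h (-C/D)
    have h2 : A + 2*(-C/D)*C + (-C/D)^2*D = A - C^2/D := by
      field_simp; ring
    rw [h2] at ht
    have := (div_le_iff₀ hDpos).mp (by linarith : C^2/D ≤ A)
    linarith

/-- Cauchy–Schwarz for the PSD form `(u,v) ↦ -⟪u, Δ v⟫`. -/
lemma cs_neg_form {V : Type*} [NormedAddCommGroup V] [InnerProductSpace ℝ V]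
    (Δ : V →ₗ[ℝ] V) (hΔsym : Δ.IsSymmetric)
    (hΔneg : ∀ v : V, (inner ℝ v (Δ v) : ℝ) ≤ 0) (u v : V) :
    (inner ℝ u (Δ v) : ℝ)^2 ≤ (-(inner ℝ u (Δ u) : ℝ)) * (-(inner ℝ v (Δ v) : ℝ)) := by
  apply quad_discrim _ _ _ (by linarith [hΔneg v])
  intro t
  have hexp : ∀ s : ℝ, (inner ℝ (u + s • v) (Δ (u + s • v)) : ℝ)
      = (inner ℝ u (Δ u) : ℝ) + 2*s*(inner ℝ u (Δ v) : ℝ) + s^2*(inner ℝ v (Δ v) : ℝ) := by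
    intro s
    have hsym : (inner ℝ v (Δ u) : ℝ) = (inner ℝ u (Δ v) : ℝ) := by
      rw [← hΔsym u v, real_inner_comm]
    simp [map_add, map_smul, inner_add_left, inner_add_right,
      inner_smul_left, inner_smul_right, hsym]
    ring
  have hneg := hΔneg (u + (-t) • v)
  rw [hexp (-t)] at hneg
  nlinarith [hneg]

/-- Interpolation inequality `‖∇Δf‖ ≤ ‖Δf‖^{2/3}·‖∇Δ²f‖^{1/3}` in cubed form,
with the gradient norm realized through `‖∇g‖² = −⟪g, Δg⟫`. -/
theorem discrete_interpolation_inequality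
    {V : Type*} [NormedAddCommGroup V] [InnerProductSpace ℝ V]
    [FiniteDimensional ℝ V]
    (Δ : V →ₗ[ℝ] V) (hΔsym : Δ.IsSymmetric)
    (hΔneg : ∀ v : V, (inner ℝ v (Δ v) : ℝ) ≤ 0)
    (f : V) :
    (-(inner ℝ (Δ f) (Δ (Δ f)) : ℝ))^3
      ≤ ‖Δ f‖^4 * (-(inner ℝ (Δ (Δ f)) (Δ (Δ (Δ f))) : ℝ)) := by
  set a : ℝ := -(inner ℝ (Δ f) (Δ (Δ f)) : ℝ) with ha
  set b : ℝ := -(inner ℝ (Δ (Δ f)) (Δ (Δ (Δ f))) : ℝ) with hb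
  have ha0 : 0 ≤ a := by have := hΔneg (Δ f); simp [ha]; linarith
  have hb0 : 0 ≤ b := by have := hΔneg (Δ (Δ f)); simp [hb]; linarith
  -- Step 1: a² ≤ ‖Δf‖²‖Δ²f‖²
  have h1 : a^2 ≤ ‖Δ f‖^2 * ‖Δ (Δ f)‖^2 := by
    have hcs := abs_real_inner_le_norm (Δ f) (Δ (Δ f))
    have h' : a ≤ ‖Δ f‖ * ‖Δ (Δ f)‖ := by
      rw [ha]
      calc -(inner ℝ (Δ f) (Δ (Δ f)) : ℝ) ≤ |(inner ℝ (Δ f) (Δ (Δ f)) : ℝ)| := neg_le_abs _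
        _ ≤ ‖Δ f‖ * ‖Δ (Δ f)‖ := hcs
    nlinarith [norm_nonneg (Δ f), norm_nonneg (Δ (Δ f))]
  -- Step 2: ‖Δ²f‖⁴ ≤ a * b
  have h2 : ‖Δ (Δ f)‖^4 ≤ a * b := by
    have hcs := cs_neg_form Δ hΔsym hΔneg (Δ f) (Δ (Δ f))
    have hval : (inner ℝ (Δ f) (Δ (Δ (Δ f))) : ℝ) = ‖Δ (Δ f)‖^2 := by
      rw [← hΔsym (Δ f) (Δ (Δ f)), real_inner_self_eq_norm_sq]
    rw [hval] at hcs
    calc ‖Δ (Δ f)‖^4 = (‖Δ (Δ f)‖^2)^2 := by ring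
      _ ≤ a * b := hcs
  -- Combine: a⁴ ≤ ‖Δf‖⁴ a b, then cancel a
  have h4 : a^4 ≤ ‖Δ f‖^4 * (a * b) := by
    have hsq : (a^2)^2 ≤ (‖Δ f‖^2 * ‖Δ (Δ f)‖^2)^2 := by
      exact pow_le_pow_left₀ (sq_nonneg a) h1 2
    have hmul : ‖Δ f‖^4 * ‖Δ (Δ f)‖^4 ≤ ‖Δ f‖^4 * (a * b) :=
      mul_le_mul_of_nonneg_left h2 (by positivity)
    nlinarith
  rcases eq_or_lt_of_le ha0 with ha0' | hapos
  · rw [← ha0']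
    have : (0:ℝ) ≤ ‖Δ f‖^4 * b := mul_nonneg (by positivity) hb0
    simpa using this
  · have : a^3 * a ≤ (‖Δ f‖^4 * b) * a := by nlinarith
    have := le_of_mul_le_mul_right this hapos
    linarith
end
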